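/- Let G be a bipartite simple graph with diameter 6 and girth 12. Then every path in G with 8 vertices (a path of length 7) is a subgraph of exactly one 12-cycle of G. -/

import Mathlib

open SimpleGraph

set_option linter.unusedSectionVars false

namespace TwelveCycleAux

open SimpleGraph.Walk

variable {V : Type*} [DecidableEq V] {G : SimpleGraph V}

/-- Parity of colors along a walk, for a 2-coloring. -/
lemma parity_aux (C : G.Coloring (Fin 2)) :
    ∀ {u v : V} (w : G.Walk u v), ((C u).val + w.length) % 2 = (C v).val % 2 := by
  intro u v w
  induction w with
  | nil => simp
  | @cons u x v h w ih =>
    have h1 : (C u).val ≠ (C x).val := fun he => C.valid h (Fin.ext he)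
    have h2 := (C u).isLt
    have h3 := (C x).isLt
    rw [Walk.length_cons]
    omega

/-- In a 2-colorable graph, any two walks with the same endpoints have the
same parity. -/
lemma walk_parity (hbip : G.Colorable 2) {u v : V} (w₁ w₂ : G.Walk u v) :
    w₁.length % 2 = w₂.length % 2 := by
  obtain ⟨C⟩ := hbip
  have h1 := parity_aux C w₁
  have h2 := parity_aux C w₂
  omega

/-- Split a walk at the first vertex belonging to a list `S`. -/
lemma exists_first_meet {u v : V} (p : G.Walk u v) (S : List V) (hv : v ∈ S) :
    ∃ (z : V) (p₁ : G.Walk u z) (p₂ : G.Walk z v),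
      p = p₁.append p₂ ∧ z ∈ S ∧ ∀ w ∈ p₁.support, w ∈ S → w = z := by
  induction p with
  | nil => exact ⟨_, Walk.nil, Walk.nil, rfl, hv, by intro w hw _; simpa using hw⟩
  | @cons u x v h p ih =>
    by_cases hu : u ∈ S
    · exact ⟨u, Walk.nil, Walk.cons h p, rfl, hu, by intro w hw _; simpa using hw⟩
    · obtain ⟨z, p₁, p₂, hsplit, hzS, hmin⟩ := ih hv
      refine ⟨z, Walk.cons h p₁, p₂, by rw [Walk.cons_append, hsplit], hzS, ?_⟩
      intro w hw hwS
      rw [Walk.support_cons] at hw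
      rcases List.mem_cons.mp hw with rfl | hw
      · exact absurd hwS hu
      · exact hmin w hw hwS

lemma exists_start_edge {u v : V} (p : G.Walk u v) (h : u ≠ v) :
    ∃ x, s(u, x) ∈ p.edges := by
  cases p with
  | nil => exact absurd rfl h
  | cons h' p => exact ⟨_, by rw [Walk.edges_cons]; exact List.mem_cons_self⟩

/-- Two distinct paths with the same endpoints yield a cycle whose length is at
most the sum of their lengths, and whose edges come from the two paths. -/
lemma cycle_of_two_paths :
    ∀ {u v : V} (p : G.Walk u v), p.IsPath → ∀ (q : G.Walk u v), q.IsPath → p ≠ q →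
      ∃ (w : V) (c : G.Walk w w), c.IsCycle ∧ c.length ≤ p.length + q.length ∧
        ∀ e ∈ c.edges, e ∈ p.edges ∨ e ∈ q.edges := by
  intro u v p
  induction p with
  | nil =>
    intro _ q hq hne
    exact absurd ((Walk.isPath_iff_eq_nil (p := q)).mp hq).symm hne
  | @cons u x v h p' ih =>
    intro hp q hq hne
    cases q with
    | nil =>
      have h0 := congrArg Walk.length (Walk.isPath_iff_eq_nil.mp hp)
      simp at h0
    | @cons _ y _ h2 q' =>
      have hp'' := (Walk.cons_isPath_iff h p').mp hp
      have hq'' := (Walk.cons_isPath_iff h2 q').mp hq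
      by_cases hxy : x = y
      · subst hxy
        by_cases hpq : p' = q'
        · exact absurd (by rw [hpq]) hne
        · obtain ⟨w, c, hc, hlen, hedge⟩ := ih hp''.1 q' hq''.1 hpq
          refine ⟨w, c, hc, ?_, ?_⟩
          · rw [Walk.length_cons, Walk.length_cons]; omega
          · intro e he
            rcases hedge e he with h' | h'
            · exact Or.inl (by rw [Walk.edges_cons]; exact List.mem_cons_of_mem _ h')
            · exact Or.inr (by rw [Walk.edges_cons]; exact List.mem_cons_of_mem _ h')
      · -- the two paths diverge immediately
        set q0 : G.Walk u v := Walk.cons h2 q' with hq0def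
        have hvS : v ∈ q0.support := Walk.end_mem_support _
        obtain ⟨z, p₁, p₂, hsplit, hzS, hmin⟩ := exists_first_meet p' q0.support hvS
        have hq₁ : (q0.takeUntil z hzS).IsPath := hq.takeUntil hzS
        set q₁ := q0.takeUntil z hzS with hq₁def
        have hq₁sub : q₁.support ⊆ q0.support := Walk.support_takeUntil_subset _ _
        have hp₁sup : p₁.support.Nodup := by
          have hseq : p'.support = p₁.support ++ p₂.support.tail := by
            rw [hsplit, Walk.support_append]
          have hnd := hp''.1.support_nodup
          rw [hseq, List.nodup_append] at hnd
          exact hnd.1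
        have hp₁ : p₁.IsPath := Walk.IsPath.mk' hp₁sup
        have hup₁ : u ∉ p₁.support := fun hw => hp''.2 (by
          rw [hsplit]; exact Walk.subset_support_append_left _ _ hw)
        have hmin' : ∀ w ∈ p₁.support, w ∈ q₁.support → w = z :=
          fun w hw hw' => hmin w hw (hq₁sub hw')
        -- the candidate cycle
        refine ⟨u, Walk.cons h (p₁.append q₁.reverse), ?_, ?_, ?_⟩
        · rw [Walk.isCycle_def]
          refine ⟨?_, by simp, ?_⟩
          · -- trail
            rw [Walk.isTrail_def, Walk.edges_cons, Walk.edges_append]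
            refine List.nodup_cons.mpr ⟨?_, List.nodup_append'.mpr ⟨hp₁.edges_nodup,
              hq₁.reverse.edges_nodup, ?_⟩⟩
            · intro hmem
              rcases List.mem_append.mp hmem with hm | hm
              · exact hup₁ (Walk.fst_mem_support_of_mem_edges p₁ hm)
              · rw [Walk.edges_reverse, List.mem_reverse] at hm
                have hm' : s(u, x) ∈ q0.edges := Walk.edges_takeUntil_subset _ _ hm
                rw [hq0def, Walk.edges_cons] at hm'
                rcases List.mem_cons.mp hm' with heq | hm''
                · rw [Sym2.eq_iff] at heq
                  rcases heq with ⟨-, hxy'⟩ | ⟨huy, -⟩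
                  · exact hxy hxy'
                  · exact G.ne_of_adj h2 huy
                · exact hq''.2 (Walk.fst_mem_support_of_mem_edges q' hm'')
            · -- edge-disjointness of the two arcs
              intro e he₁
              induction e using Sym2.ind with
              | _ α β =>
                intro he₂
                rw [Walk.edges_reverse, List.mem_reverse] at he₂
                have hα : α = z := hmin' α (Walk.fst_mem_support_of_mem_edges p₁ he₁)
                  (Walk.fst_mem_support_of_mem_edges q₁ he₂)
                have hβ : β = z := hmin' β (Walk.snd_mem_support_of_mem_edges p₁ he₁)
                  (Walk.snd_mem_support_of_mem_edges q₁ he₂)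
                have hadj : G.Adj α β := (G.mem_edgeSet).mp (p₁.edges_subset_edgeSet he₁)
                exact G.ne_of_adj hadj (hα.trans hβ.symm)
          · -- support tail nodup
            rw [Walk.support_cons, List.tail_cons, Walk.support_append]
            refine List.nodup_append'.mpr ⟨hp₁sup, ?_, ?_⟩
            · have := hq₁.reverse.support_nodup
              rw [Walk.support_eq_cons q₁.reverse] at this
              exact this.of_cons
            · intro w hw hw'
              have hz : z ∉ q₁.reverse.support.tail := by
                have := hq₁.reverse.support_nodup
                rw [Walk.support_eq_cons q₁.reverse] at this
                exact (List.nodup_cons.mp this).1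
              have hwq : w ∈ q₁.support := by
                have : w ∈ q₁.reverse.support := List.mem_of_mem_tail hw'
                rwa [Walk.support_reverse, List.mem_reverse] at this
              have := hmin' w hw hwq
              subst this
              exact hz hw'
        · -- length bound
          have hplen : p'.length = p₁.length + p₂.length := by
            rw [hsplit, Walk.length_append]
          have hqlen : q₁.length ≤ q0.length := Walk.length_takeUntil_le _ _
          rw [Walk.length_cons, Walk.length_append, Walk.length_reverse,
            Walk.length_cons]
          omega
        · -- edges containment
          intro e he
          rw [Walk.edges_cons, Walk.edges_append] at he
          rcases List.mem_cons.mp he with rfl | he'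
          · exact Or.inl (by rw [Walk.edges_cons]; exact List.mem_cons_self)
          · rcases List.mem_append.mp he' with hm | hm
            · refine Or.inl ?_
              rw [Walk.edges_cons]
              refine List.mem_cons_of_mem _ ?_
              rw [hsplit, Walk.edges_append]
              exact List.mem_append_left _ hm
            · rw [Walk.edges_reverse, List.mem_reverse] at hm
              exact Or.inr (Walk.edges_takeUntil_subset _ _ hm)

end TwelveCycleAux

open TwelveCycleAux SimpleGraph.Walk

/-- In a bipartite graph of diameter 6 and girth 12, every path on 8 vertices
(a path of length 7) is a subgraph of exactly one 12-cycle, where cycles are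
identified with their edge sets (rotations and reflections count once). -/
theorem path_length_seven_in_unique_twelve_cycle {V : Type u} [DecidableEq V]
    (G : SimpleGraph V) (hbip : G.Colorable 2)
    (hdiam : G.diam = 6) (hgirth : G.girth = 12)
    {a b : V} (p : G.Walk a b) (hp : p.IsPath) (hlen : p.length = 7) :
    ∃! s : Finset (Sym2 V),
      (∃ (w : V) (c : G.Walk w w), c.IsCycle ∧ c.length = 12 ∧ c.edges.toFinset = s) ∧
      p.edges.toFinset ⊆ s := by
  classical
  -- every cycle has length at least 12
  have hG12 : ∀ (w : V) (c : G.Walk w w), c.IsCycle → 12 ≤ c.length := by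
    intro w c hc
    have h1 : G.egirth ≤ (c.length : ℕ∞) := by
      refine iInf_le_of_le w ?_
      refine iInf_le_of_le c ?_
      exact iInf_le _ hc
    have h2 : G.egirth ≠ ⊤ := ne_top_of_le_ne_top (ENat.coe_ne_top _) h1
    have hgirth' : G.egirth.toNat = 12 := hgirth
    have h3 : G.egirth = ((12 : ℕ) : ℕ∞) := by
      rw [← ENat.coe_toNat h2]
      exact_mod_cast hgirth'
    rw [h3] at h1
    exact_mod_cast h1
  have hediam : G.ediam ≠ ⊤ := by
    intro h
    rw [SimpleGraph.diam, h] at hdiam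
    simp at hdiam
  have hab : a ≠ b := by
    intro h
    subst h
    have := congrArg Walk.length ((Walk.isPath_iff_eq_nil (p := p)).mp hp)
    simp [hlen] at this
  -- bipartite parity
  have hodd : ∀ w : G.Walk b a, w.length % 2 = 1 := by
    intro w
    have := walk_parity hbip w p.reverse
    rw [Walk.length_reverse, hlen] at this
    omega
  -- a geodesic from b to a
  obtain ⟨q, hqp, hqlen⟩ := (Reachable.exists_path_of_dist ⟨p.reverse⟩ :
    ∃ (r : G.Walk b a), r.IsPath ∧ r.length = G.dist b a)
  have hqle6 : q.length ≤ 6 := by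
    rw [hqlen, ← hdiam]
    exact SimpleGraph.dist_le_diam hediam
  have hqle5 : q.length ≤ 5 := by
    have := hodd q
    omega
  -- q is the unique path from b to a of length at most 5
  have hquniq : ∀ (r : G.Walk b a), r.IsPath → r.length ≤ 5 → r = q := by
    intro r hr hrl
    by_contra hne
    obtain ⟨w, c, hc, hlc, -⟩ := cycle_of_two_paths r hr q hqp hne
    have := hG12 w c hc
    omega
  have hq5 : q.length = 5 := by
    by_contra h5
    have hne : p.reverse ≠ q := by
      intro he
      have := congrArg Walk.length he
      rw [Walk.length_reverse, hlen] at this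
      omega
    obtain ⟨w, c, hc, hlc, -⟩ := cycle_of_two_paths p.reverse hp.reverse q hqp hne
    have := hG12 w c hc
    rw [Walk.length_reverse, hlen] at hlc
    omega
  -- p and q share only the endpoints
  have hshare : ∀ x, x ∈ p.support → x ∈ q.support → x = a ∨ x = b := by
    intro x hxp hxq
    by_contra hcon
    push_neg at hcon
    obtain ⟨hxa, hxb⟩ := hcon
    have hsp := congrArg Walk.length (Walk.take_spec p hxp)
    rw [Walk.length_append] at hsp
    have hsq := congrArg Walk.length (Walk.take_spec q hxq)
    rw [Walk.length_append] at hsq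
    have hp₁ := hp.takeUntil hxp
    have hp₂ := hp.dropUntil hxp
    have hq₁ := hqp.takeUntil hxq
    have hq₂ := hqp.dropUntil hxq
    have hl1 : (p.takeUntil x hxp).length ≠ 0 :=
      fun h0 => hxa (Walk.eq_of_length_eq_zero h0).symm
    have hl2 : (p.dropUntil x hxp).length ≠ 0 :=
      fun h0 => hxb (Walk.eq_of_length_eq_zero h0)
    have hl3 : (q.takeUntil x hxq).length ≠ 0 :=
      fun h0 => hxb (Walk.eq_of_length_eq_zero h0).symm
    have hl4 : (q.dropUntil x hxq).length ≠ 0 :=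
      fun h0 => hxa (Walk.eq_of_length_eq_zero h0)
    by_cases hc1 : p.takeUntil x hxp = (q.dropUntil x hxq).reverse
    · by_cases hc2 : p.dropUntil x hxp = (q.takeUntil x hxq).reverse
      · have e1 := congrArg Walk.length hc1
        have e2 := congrArg Walk.length hc2
        rw [Walk.length_reverse] at e1 e2
        rw [hlen] at hsp
        rw [hq5] at hsq
        omega
      · obtain ⟨w, c, hc, hlc, -⟩ := cycle_of_two_paths (p.dropUntil x hxp) hp₂
          (q.takeUntil x hxq).reverse hq₁.reverse hc2
        have := hG12 w c hc
        rw [Walk.length_reverse] at hlc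
        rw [hlen] at hsp
        rw [hq5] at hsq
        omega
    · obtain ⟨w, c, hc, hlc, -⟩ := cycle_of_two_paths (p.takeUntil x hxp) hp₁
        (q.dropUntil x hxq).reverse hq₂.reverse hc1
      have := hG12 w c hc
      rw [Walk.length_reverse] at hlc
      rw [hlen] at hsp
      rw [hq5] at hsq
      omega
  -- p and q are edge-disjoint
  have hpq_e : ∀ e ∈ p.edges, e ∉ q.edges := by
    intro e
    induction e using Sym2.ind with
    | _ α β =>
      intro hep heq
      have hadj : G.Adj α β := (G.mem_edgeSet).mp (p.edges_subset_edgeSet hep)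
      have hα := hshare α (Walk.fst_mem_support_of_mem_edges p hep)
        (Walk.fst_mem_support_of_mem_edges q heq)
      have hβ := hshare β (Walk.snd_mem_support_of_mem_edges p hep)
        (Walk.snd_mem_support_of_mem_edges q heq)
      have hadj' : G.Adj b a := by
        rcases hα with rfl | rfl <;> rcases hβ with rfl | rfl
        · exact absurd rfl (G.ne_of_adj hadj)
        · exact hadj.symm
        · exact hadj
        · exact absurd rfl (G.ne_of_adj hadj)
      have hr : (Walk.cons hadj' Walk.nil : G.Walk b a).IsPath := by
        rw [Walk.cons_isPath_iff]
        exact ⟨Walk.IsPath.nil, by simp [Ne.symm hab]⟩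
      have := hquniq _ hr (by simp)
      have := congrArg Walk.length this
      rw [hq5] at this
      simp at this
  -- the 12-cycle through p
  have hc₀len : (p.append q).length = 12 := by
    rw [Walk.length_append, hlen, hq5]
  have hc₀ : (p.append q).IsCycle := by
    rw [Walk.isCycle_def]
    refine ⟨?_, ?_, ?_⟩
    · rw [Walk.isTrail_def, Walk.edges_append]
      exact List.nodup_append'.mpr ⟨hp.edges_nodup, hqp.edges_nodup, hpq_e⟩
    · intro hn
      have := congrArg Walk.length hn
      rw [hc₀len] at this
      simp at this
    · rw [Walk.tail_support_append]
      refine List.nodup_append'.mpr ⟨?_, ?_, ?_⟩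
      · have := hp.support_nodup
        rw [Walk.support_eq_cons p] at this
        exact this.of_cons
      · have := hqp.support_nodup
        rw [Walk.support_eq_cons q] at this
        exact this.of_cons
      · intro w hw hw'
        have h1 : w ∈ p.support := List.mem_of_mem_tail hw
        have h2 : w ∈ q.support := List.mem_of_mem_tail hw'
        rcases hshare w h1 h2 with rfl | rfl
        · have := hp.support_nodup
          rw [Walk.support_eq_cons p] at this
          exact (List.nodup_cons.mp this).1 hw
        · have := hqp.support_nodup
          rw [Walk.support_eq_cons q] at this
          exact (List.nodup_cons.mp this).1 hw'
  refine ⟨(p.append q).edges.toFinset, ⟨⟨a, p.append q, hc₀, hc₀len, rfl⟩, ?_⟩, ?_⟩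
  · rw [Walk.edges_append, List.toFinset_append]
    exact Finset.subset_union_left
  · -- uniqueness
    rintro s ⟨⟨w, c, hc, hc12, rfl⟩, hsub⟩
    have hpc : ∀ e ∈ p.edges, e ∈ c.edges := fun e he =>
      List.mem_toFinset.mp (hsub (List.mem_toFinset.mpr he))
    obtain ⟨x₂, hfst⟩ := exists_start_edge p hab
    obtain ⟨y₂, hlst'⟩ := exists_start_edge p.reverse (Ne.symm hab)
    rw [Walk.edges_reverse, List.mem_reverse] at hlst'
    have ha_mem : a ∈ c.support := Walk.fst_mem_support_of_mem_edges c (hpc _ hfst)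
    set c' := c.rotate a ha_mem with hc'def
    have hc' : c'.IsCycle := hc.rotate ha_mem
    have hperm : c'.edges.Perm c.edges := (Walk.rotate_edges c a ha_mem).perm
    have hc'12 : c'.length = 12 := by
      rw [← Walk.length_edges, hperm.length_eq, Walk.length_edges, hc12]
    have hb_mem : b ∈ c'.support :=
      Walk.fst_mem_support_of_mem_edges c' (hperm.mem_iff.mpr (hpc _ hlst'))
    set r₁ := c'.takeUntil b hb_mem with hr₁def
    set r₂ := c'.dropUntil b hb_mem with hr₂def
    have hspec : r₁.append r₂ = c' := Walk.take_spec c' hb_mem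
    have hlen12 : r₁.length + r₂.length = 12 := by
      have := congrArg Walk.length hspec
      rw [Walk.length_append, hc'12] at this
      exact this
    have htail : c'.support.tail = r₁.support.tail ++ r₂.support.tail := by
      rw [← hspec, Walk.tail_support_append]
    have hnodup := hc'.support_nodup
    rw [htail, List.nodup_append'] at hnodup
    obtain ⟨hnd1, hnd2, hdisj⟩ := hnodup
    have hbT₁ : b ∈ r₁.support.tail := by
      have hb : b ∈ r₁.support := Walk.end_mem_support _
      rw [Walk.support_eq_cons r₁] at hb
      rcases List.mem_cons.mp hb with h' | h'
      · exact absurd h'.symm hab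
      · exact h'
    have haT₂ : a ∈ r₂.support.tail := by
      have ha : a ∈ r₂.support := Walk.end_mem_support _
      rw [Walk.support_eq_cons r₂] at ha
      rcases List.mem_cons.mp ha with h' | h'
      · exact absurd h' hab
      · exact h'
    have hr₁ : r₁.IsPath := by
      refine Walk.IsPath.mk' ?_
      rw [Walk.support_eq_cons r₁]
      exact List.nodup_cons.mpr ⟨fun ha' => hdisj ha' haT₂, hnd1⟩
    have hr₂ : r₂.IsPath := by
      refine Walk.IsPath.mk' ?_
      rw [Walk.support_eq_cons r₂]
      exact List.nodup_cons.mpr ⟨fun hb' => hdisj hbT₁ hb', hnd2⟩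
    have hce : c.edges.toFinset = r₁.edges.toFinset ∪ r₂.edges.toFinset := by
      have h1 : c.edges.toFinset = c'.edges.toFinset := by
        ext e
        simp only [List.mem_toFinset]
        exact hperm.mem_iff.symm
      rw [h1, ← hspec, Walk.edges_append, List.toFinset_append]
    have hpe : ∀ e ∈ p.edges, e ∈ r₁.edges ∨ e ∈ r₂.edges := by
      intro e he
      have h1 : e ∈ c'.edges := hperm.mem_iff.mpr (hpc e he)
      rw [← hspec, Walk.edges_append] at h1
      exact List.mem_append.mp h1
    have hparity : r₁.length % 2 = 1 := by
      have := walk_parity hbip r₁ p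
      rw [hlen] at this
      omega
    -- helper: if all edges of p lie in a 7-edge path r, and p ≠ that path's
    -- appropriate orientation, we get a short cycle
    have hshort : ∀ (r : G.Walk a b), r.IsPath → r.length = 7 →
        (∀ e ∈ p.edges, e ∈ r.edges) → r = p := by
      intro r hr hr7 hsubr
      by_contra hne
      obtain ⟨w', k, hk, -, hke⟩ := cycle_of_two_paths r hr p hp hne
      have hk12 := hG12 w' k hk
      have hkr : ∀ e ∈ k.edges, e ∈ r.edges := by
        intro e he
        rcases hke e he with h' | h'
        · exact h'
        · exact hsubr e h'
      have hklen : k.length ≤ 7 := by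
        have h1 : k.edges.toFinset.card = k.length := by
          rw [List.toFinset_card_of_nodup hk.edges_nodup, Walk.length_edges]
        have h2 : k.edges.toFinset ⊆ r.edges.toFinset := by
          intro e he
          exact List.mem_toFinset.mpr (hkr e (List.mem_toFinset.mp he))
        have h3 := Finset.card_le_card h2
        have h4 := List.toFinset_card_le r.edges
        rw [Walk.length_edges, hr7] at h4
        omega
      omega
    by_cases hA : r₂.length ≤ 5
    · have hr₂q : r₂ = q := hquniq r₂ hr₂ hA
      have hl2 : r₂.length = 5 := by rw [hr₂q, hq5]
      have hl1 : r₁.length = 7 := by omega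
      have hp_sub : ∀ e ∈ p.edges, e ∈ r₁.edges := by
        intro e he
        refine (hpe e he).resolve_right (fun h2 => hpq_e e he ?_)
        rwa [hr₂q] at h2
      have hr₁p : r₁ = p := hshort r₁ hr₁ hl1 hp_sub
      rw [hce, hr₁p, hr₂q, Walk.edges_append, List.toFinset_append]
    · by_cases hB : r₁.length ≤ 5
      · have hr₁q : r₁.reverse = q := hquniq r₁.reverse hr₁.reverse
          (by rw [Walk.length_reverse]; exact hB)
        have hl1 : r₁.length = 5 := by
          have := congrArg Walk.length hr₁q
          rw [Walk.length_reverse, hq5] at this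
          exact this
        have hl2 : r₂.length = 7 := by omega
        have hreq : ∀ e ∈ r₁.edges, e ∈ q.edges := by
          intro e he
          rw [← hr₁q, Walk.edges_reverse, List.mem_reverse]
          exact he
        have hp_sub : ∀ e ∈ p.edges, e ∈ r₂.edges := by
          intro e he
          exact (hpe e he).resolve_left (fun h1 => hpq_e e he (hreq e h1))
        have hp_sub' : ∀ e ∈ p.edges, e ∈ r₂.reverse.edges := by
          intro e he
          rw [Walk.edges_reverse, List.mem_reverse]
          exact hp_sub e he
        have hr₂p : r₂.reverse = p := hshort r₂.reverse hr₂.reverse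
          (by rw [Walk.length_reverse]; exact hl2) hp_sub'
        have hr₂p' : r₂ = p.reverse := by
          rw [← hr₂p, Walk.reverse_reverse]
        rw [hce, hr₂p', ← hr₁q, Walk.edges_append, List.toFinset_append]
        rw [Walk.edges_reverse, Walk.edges_reverse, List.toFinset_reverse,
          List.toFinset_reverse]
        exact Finset.union_comm _ _
      · exfalso
        omega
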